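/- For all n₁, n₂ ∈ ℕ and all θ₁, θ₂ ≥ 0, one has ∑_{k=1}^{n₁} (1/k)(θ₁^{n₁−k} θ₂^{n₂+k} − θ₁^{n₁} θ₂^{n₂}) + ∑_{k=1}^{n₂} (1/k)(θ₁^{n₁+k} θ₂^{n₂−k} − θ₁^{n₁} θ₂^{n₂}) = ∫₀¹ u^{−1} [ ((1−u)θ₁ + u θ₂)^{n₁} θ₂^{n₂} − θ₁^{n₁} θ₂^{n₂} ] du + ∫₀¹ u^{−1} [ θ₁^{n₁} ((1−u)θ₂ + u θ₁)^{n₂} − θ₁^{n₁} θ₂^{n₂} ] du, where both u-integrals converge absolutely. (This is the single-edge duality, with duality function D(θ,η) = θ₁^{η₁}θ₂^{η₂}, between the discrete harmonic process and its hidden-parameter model.) -/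

import Mathlib

open MeasureTheory Real Set

private lemma expand_pow (x c : ℝ) (n : ℕ) :
    (x + c)^n = x^n + ∑ i ∈ Finset.range n, (n.choose (i+1):ℝ) * x^(n-(i+1)) * c^(i+1) := by
  rw [add_comm x c, add_pow, Finset.sum_range_succ']
  simp only [pow_zero, Nat.sub_zero, Nat.choose_zero_right, Nat.cast_one, one_mul, mul_one]
  rw [add_comm]
  congr 1
  exact Finset.sum_congr rfl fun i _ => by ring

private lemma key_integral (x d : ℝ) (n : ℕ) :
    IntegrableOn (fun u : ℝ => u⁻¹ * ((x + u*d)^n - x^n)) (Ioo 0 1) volume ∧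
    ∫ u in Ioo (0:ℝ) 1, u⁻¹ * ((x + u*d)^n - x^n)
      = ∑ i ∈ Finset.range n, ((i:ℝ)+1)⁻¹ * (n.choose (i+1) : ℝ) * x^(n-(i+1)) * d^(i+1) := by
  set g : ℝ → ℝ := fun u => ∑ i ∈ Finset.range n,
      (n.choose (i+1):ℝ) * x^(n-(i+1)) * d^(i+1) * u^i with hg
  have hcont : Continuous g := by
    apply continuous_finset_sum
    intro i _
    exact continuous_const.mul (continuous_pow i)
  have hEqOn : EqOn (fun u : ℝ => u⁻¹ * ((x + u*d)^n - x^n)) g (Ioo 0 1) := by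
    intro u hu
    have hu0 : u ≠ 0 := ne_of_gt hu.1
    simp only [g]
    rw [expand_pow x (u*d) n, add_sub_cancel_left, Finset.mul_sum]
    refine Finset.sum_congr rfl fun i _ => ?_
    have h1 : (u*d)^(i+1) = u * (u^i * d^(i+1)) := by ring
    rw [h1]
    field_simp
  have hgint : IntegrableOn g (Ioo 0 1) volume :=
    (hcont.integrableOn_Icc (a := 0) (b := 1)).mono_set Ioo_subset_Icc_self
  refine ⟨hgint.congr_fun hEqOn.symm measurableSet_Ioo, ?_⟩
  rw [setIntegral_congr_fun measurableSet_Ioo hEqOn, hg]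
  beta_reduce
  rw [integral_finset_sum _ (f := fun i u => (n.choose (i+1):ℝ) * x^(n-(i+1)) * d^(i+1) * u^i) (fun i _ =>
    ((continuous_const.mul (continuous_pow i)).integrableOn_Icc (a := (0:ℝ)) (b := 1)).mono_set
      Ioo_subset_Icc_self)]
  refine Finset.sum_congr rfl fun i _ => ?_
  rw [integral_const_mul]
  have hIoo : ∫ u in Ioo (0:ℝ) 1, u^i = ((i:ℝ)+1)⁻¹ := by
    rw [← integral_Ioc_eq_integral_Ioo, ← intervalIntegral.integral_of_le zero_le_one,
      integral_pow]
    ring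
  rw [hIoo]
  ring

private lemma key_sum (x d : ℝ) (n : ℕ) :
    ∑ i ∈ Finset.range n, ((i:ℝ)+1)⁻¹ * (x^(n-(i+1)) * (x+d)^(i+1) - x^n)
    = ∑ i ∈ Finset.range n, ((i:ℝ)+1)⁻¹ * (n.choose (i+1) : ℝ) * x^(n-(i+1)) * d^(i+1) := by
  induction n with
  | zero => simp
  | succ n ih =>
    have hA : ∑ i ∈ Finset.range (n+1), ((i:ℝ)+1)⁻¹ * (x^(n+1-(i+1)) * (x+d)^(i+1) - x^(n+1))
        = x * (∑ i ∈ Finset.range n, ((i:ℝ)+1)⁻¹ * (x^(n-(i+1)) * (x+d)^(i+1) - x^n))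
          + ((n:ℝ)+1)⁻¹ * ((x+d)^(n+1) - x^(n+1)) := by
      rw [Finset.sum_range_succ, Finset.mul_sum]
      congr 1
      · refine Finset.sum_congr rfl fun i hi => ?_
        have hi' : i < n := Finset.mem_range.mp hi
        have h1 : n + 1 - (i+1) = n - i := by omega
        have h2 : x^(n-i) = x * x^(n-(i+1)) := by
          rw [← pow_succ']
          congr 1
          omega
        rw [h1, h2, pow_succ]
        ring
      · simp
    have hB : ∑ i ∈ Finset.range (n+1), ((i:ℝ)+1)⁻¹ * ((n+1).choose (i+1) : ℝ)
            * x^(n+1-(i+1)) * d^(i+1)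
        = x * (∑ i ∈ Finset.range n, ((i:ℝ)+1)⁻¹ * (n.choose (i+1) : ℝ)
            * x^(n-(i+1)) * d^(i+1))
          + ((n:ℝ)+1)⁻¹ * ((x+d)^(n+1) - x^(n+1)) := by
      rw [expand_pow x d (n+1), add_sub_cancel_left, Finset.mul_sum, Finset.mul_sum,
        Finset.sum_range_succ, Finset.sum_range_succ (n := n),
        ← add_assoc, ← Finset.sum_add_distrib]
      congr 1
      · refine Finset.sum_congr rfl fun i hi => ?_
        have hi' : i < n := Finset.mem_range.mp hi
        have h1 : n + 1 - (i+1) = n - i := by omega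
        have h2 : x^(n-i) = x * x^(n-(i+1)) := by
          rw [← pow_succ']
          congr 1
          omega
        have hpascal : ((n+1).choose (i+1) : ℝ) = (n.choose i : ℝ) + (n.choose (i+1) : ℝ) := by
          exact_mod_cast congrArg (Nat.cast (R := ℝ)) (Nat.choose_succ_succ n i)
        have hchoose : ((n:ℝ)+1) * (n.choose i : ℝ) = ((n+1).choose (i+1) : ℝ) * ((i:ℝ)+1) := by
          exact_mod_cast congrArg (Nat.cast (R := ℝ)) (Nat.add_one_mul_choose_eq n i)
        rw [h1, h2]
        have hi0 : ((i:ℝ)+1) ≠ 0 := by positivity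
        have hn0 : ((n:ℝ)+1) ≠ 0 := by positivity
        field_simp
        linear_combination (x * x^(n-(i+1)) * d^(i+1)) *
          (hchoose + ((n:ℝ)+1) * hpascal)
      · simp
    rw [hA, hB, ih]

/-- Single-edge duality, with duality function `D(θ,η) = θ₁^{η₁} θ₂^{η₂}`, between the
discrete harmonic process and its hidden-parameter model. -/
theorem discrete_harmonic_duality (n₁ n₂ : ℕ) (θ₁ θ₂ : ℝ) (hθ₁ : 0 ≤ θ₁) (hθ₂ : 0 ≤ θ₂) :
    IntegrableOn (fun u : ℝ =>
      u⁻¹ * (((1 - u) * θ₁ + u * θ₂) ^ n₁ * θ₂ ^ n₂ - θ₁ ^ n₁ * θ₂ ^ n₂))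
      (Set.Ioo 0 1) volume ∧
    IntegrableOn (fun u : ℝ =>
      u⁻¹ * (θ₁ ^ n₁ * ((1 - u) * θ₂ + u * θ₁) ^ n₂ - θ₁ ^ n₁ * θ₂ ^ n₂))
      (Set.Ioo 0 1) volume ∧
    (∑ k ∈ Finset.Icc 1 n₁, (k : ℝ)⁻¹ * (θ₁ ^ (n₁ - k) * θ₂ ^ (n₂ + k) - θ₁ ^ n₁ * θ₂ ^ n₂)) +
    (∑ k ∈ Finset.Icc 1 n₂, (k : ℝ)⁻¹ * (θ₁ ^ (n₁ + k) * θ₂ ^ (n₂ - k) - θ₁ ^ n₁ * θ₂ ^ n₂))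
      = (∫ u in Set.Ioo (0:ℝ) 1,
          u⁻¹ * (((1 - u) * θ₁ + u * θ₂) ^ n₁ * θ₂ ^ n₂ - θ₁ ^ n₁ * θ₂ ^ n₂)) +
        (∫ u in Set.Ioo (0:ℝ) 1,
          u⁻¹ * (θ₁ ^ n₁ * ((1 - u) * θ₂ + u * θ₁) ^ n₂ - θ₁ ^ n₁ * θ₂ ^ n₂)) := by
  obtain ⟨hI1, hE1⟩ := key_integral θ₁ (θ₂ - θ₁) n₁
  obtain ⟨hI2, hE2⟩ := key_integral θ₂ (θ₁ - θ₂) n₂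
  have hf1 : (fun u : ℝ =>
      u⁻¹ * (((1 - u) * θ₁ + u * θ₂) ^ n₁ * θ₂ ^ n₂ - θ₁ ^ n₁ * θ₂ ^ n₂))
      = fun u : ℝ => θ₂ ^ n₂ * (u⁻¹ * ((θ₁ + u * (θ₂ - θ₁)) ^ n₁ - θ₁ ^ n₁)) := by
    funext u
    ring
  have hf2 : (fun u : ℝ =>
      u⁻¹ * (θ₁ ^ n₁ * ((1 - u) * θ₂ + u * θ₁) ^ n₂ - θ₁ ^ n₁ * θ₂ ^ n₂))
      = fun u : ℝ => θ₁ ^ n₁ * (u⁻¹ * ((θ₂ + u * (θ₁ - θ₂)) ^ n₂ - θ₂ ^ n₂)) := by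
    funext u
    ring
  refine ⟨by rw [hf1]; exact hI1.const_mul _, by rw [hf2]; exact hI2.const_mul _, ?_⟩
  rw [hf1, hf2, integral_const_mul, integral_const_mul, hE1, hE2,
    ← Finset.Ico_add_one_right_eq_Icc, ← Finset.Ico_add_one_right_eq_Icc,
    Finset.sum_Ico_eq_sum_range, Finset.sum_Ico_eq_sum_range]
  simp only [Nat.add_sub_cancel]
  have hs1 : ∑ i ∈ Finset.range n₁,
        ((1+i : ℕ) : ℝ)⁻¹ * (θ₁ ^ (n₁ - (1+i)) * θ₂ ^ (n₂ + (1+i)) - θ₁ ^ n₁ * θ₂ ^ n₂)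
      = θ₂ ^ n₂ * ∑ i ∈ Finset.range n₁,
        ((i:ℝ)+1)⁻¹ * (θ₁^(n₁-(i+1)) * (θ₁+(θ₂-θ₁))^(i+1) - θ₁^n₁) := by
    rw [Finset.mul_sum]
    refine Finset.sum_congr rfl fun i _ => ?_
    have h2 : θ₁ + (θ₂ - θ₁) = θ₂ := by ring
    have h3 : 1 + i = i + 1 := by omega
    rw [h2, h3, pow_add]
    push_cast
    ring
  have hs2 : ∑ i ∈ Finset.range n₂,
        ((1+i : ℕ) : ℝ)⁻¹ * (θ₁ ^ (n₁ + (1+i)) * θ₂ ^ (n₂ - (1+i)) - θ₁ ^ n₁ * θ₂ ^ n₂)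
      = θ₁ ^ n₁ * ∑ i ∈ Finset.range n₂,
        ((i:ℝ)+1)⁻¹ * (θ₂^(n₂-(i+1)) * (θ₂+(θ₁-θ₂))^(i+1) - θ₂^n₂) := by
    rw [Finset.mul_sum]
    refine Finset.sum_congr rfl fun i _ => ?_
    have h2 : θ₂ + (θ₁ - θ₂) = θ₁ := by ring
    have h3 : 1 + i = i + 1 := by omega
    rw [h2, h3, pow_add]
    push_cast
    ring
  rw [hs1, hs2, key_sum θ₁ (θ₂ - θ₁) n₁, key_sum θ₂ (θ₁ - θ₂) n₂]
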